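/- arXiv:1411.0944 — 7 statements merged into one kernel-verified Lean document; each statement's English description precedes it below -/
import Mathlib

section
/- Let v be a uniform complete simple game on N = {1,…,n}. Then the raw Public Good index satisfies the dominance property on v: for all players i, j with i ⊒ j one has PGI^r_i(v) ≥ PGI^r_j(v), i.e., |M_i| ≥ |M_j|. -/
open scoped Classical

/-- A simple game on the player set `{1,…,n}` (modeled as `Fin n`):
a monotone map from coalitions to `{0,1}` (modeled as `Bool`) that is
`0` on the empty coalition and `1` on the grand coalition. -/
structure SimpleGame (n : ℕ) where
  win : Finset (Fin n) → Bool
  win_empty : win ∅ = false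
  win_univ : win Finset.univ = true
  win_mono : ∀ ⦃S T : Finset (Fin n)⦄, S ⊆ T → win S = true → win T = true

namespace SimpleGame

variable {n : ℕ}

/-- Player `i` dominates player `j`: `v((S ∪ {i}) \ {j}) ≥ v(S)` for every
coalition `S` with `j ∈ S` and `i ∉ S`. -/
def Dominates (v : SimpleGame n) (i j : Fin n) : Prop :=
  ∀ S : Finset (Fin n), j ∈ S → i ∉ S → v.win S ≤ v.win ((S ∪ {i}) \ {j})

/-- The game is complete if the dominance relation is a total preorder. -/
def IsComplete (v : SimpleGame n) : Prop :=
  (∀ i, v.Dominates i i) ∧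
  (∀ i j, v.Dominates i j ∨ v.Dominates j i) ∧
  (∀ i j k, v.Dominates i j → v.Dominates j k → v.Dominates i k)

/-- `S` is a minimal winning coalition: winning and every proper subset is losing. -/
def IsMWC (v : SimpleGame n) (S : Finset (Fin n)) : Prop :=
  v.win S = true ∧ ∀ T ⊂ S, v.win T = false

/-- `M_i`: the set of minimal winning coalitions containing player `i`. -/
noncomputable def Mset (v : SimpleGame n) (i : Fin n) : Finset (Finset (Fin n)) :=
  Finset.univ.filter fun S => v.IsMWC S ∧ i ∈ S

/-- `M_i(l)`: minimal winning coalitions of cardinality `l` containing `i`. -/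
noncomputable def Mlset (v : SimpleGame n) (i : Fin n) (l : ℕ) : Finset (Finset (Fin n)) :=
  (v.Mset i).filter fun S => S.card = l

/-- Raw Public Good index: `PGI^r_i(v) = |M_i|`. -/
noncomputable def PGI (v : SimpleGame n) (i : Fin n) : ℕ := (v.Mset i).card

/-- Raw Deegan-Packel index: `DP^r_i(v) = Σ_{S ∈ M_i} 1/|S|`. -/
noncomputable def DP (v : SimpleGame n) (i : Fin n) : ℝ :=
  ∑ S ∈ v.Mset i, (1 : ℝ) / (S.card : ℝ)

/-- The game is uniform if all minimal winning coalitions have the same cardinality. -/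
def IsUniform (v : SimpleGame n) : Prop :=
  ∀ S T, v.IsMWC S → v.IsMWC T → S.card = T.card

/-- `[q; w]` is a weighted representation of `v`. -/
def IsWeightedRep (v : SimpleGame n) (q : ℝ) (w : Fin n → ℝ) : Prop :=
  0 < q ∧ (∀ i, 0 ≤ w i) ∧ ∀ S : Finset (Fin n), v.win S = true ↔ q ≤ ∑ i ∈ S, w i

/-- The game is weighted. -/
def IsWeighted (v : SimpleGame n) : Prop := ∃ q w, v.IsWeightedRep q w

/-- `D_i`: coalitions decisive for player `i`. -/
noncomputable def Dset (v : SimpleGame n) (i : Fin n) : Finset (Finset (Fin n)) :=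
  Finset.univ.filter fun S => i ∈ S ∧ v.win S = true ∧ v.win (S.erase i) = false

/-- Raw Banzhaf index: `Bz^r_i(v) = |D_i|`. -/
noncomputable def Bz (v : SimpleGame n) (i : Fin n) : ℕ := (v.Dset i).card

/-- `S` is a shift-minimal winning coalition. -/
def IsSMWC (v : SimpleGame n) (S : Finset (Fin n)) : Prop :=
  v.IsMWC S ∧ ∀ i ∈ S, ∀ j ∉ S, v.Dominates i j → ¬ v.Dominates j i →
    v.win ((S \ {i}) ∪ {j}) = false

/-- `𝒮_i`: the set of shift-minimal winning coalitions containing player `i`. -/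
noncomputable def Sset (v : SimpleGame n) (i : Fin n) : Finset (Finset (Fin n)) :=
  Finset.univ.filter fun S => v.IsSMWC S ∧ i ∈ S

/-- Raw Shift index: `S^r_i(v) = |𝒮_i|`. -/
noncomputable def ShiftIdx (v : SimpleGame n) (i : Fin n) : ℕ := (v.Sset i).card

/-- The number of players for which the coalition `S` is decisive. -/
noncomputable def numDecisive (v : SimpleGame n) (S : Finset (Fin n)) : ℕ :=
  (Finset.univ.filter fun k => k ∈ S ∧ v.win S = true ∧ v.win (S.erase k) = false).card

/-- Raw Johnston index: `Jo^r_i(v) = Σ_{S ∈ D_i} 1/#{decisive players of S}`. -/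
noncomputable def Jo (v : SimpleGame n) (i : Fin n) : ℝ :=
  ∑ S ∈ v.Dset i, (1 : ℝ) / (v.numDecisive S : ℝ)

/-- `i` is a null player: it belongs to no minimal winning coalition. -/
def IsNull (v : SimpleGame n) (i : Fin n) : Prop := ∀ S, v.IsMWC S → i ∉ S

end SimpleGame

/-- A power index: assigns to every `n`-player simple game a vector in `ℝ^n`. -/
abbrev PowerIndex : Type := ∀ n : ℕ, SimpleGame n → Fin n → ℝ

/-- A class of games (one set of games for every number of players). -/
abbrev GameClass : Type := ∀ n : ℕ, Set (SimpleGame n)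

/-- Convex combination `P^α = Σ_h α_h P^h` of power indices. -/
noncomputable def convexComb {r : ℕ} (α : Fin r → ℝ) (P : Fin r → PowerIndex) : PowerIndex :=
  fun n v i => ∑ h, α h * P h n v i

/-- `Q` satisfies local monotonicity on the `n`-player games of `𝔊`. -/
def LMon (𝔊 : GameClass) (n : ℕ) (Q : PowerIndex) : Prop :=
  ∀ v ∈ 𝔊 n, ∀ i j : Fin n, v.Dominates i j → Q n v j ≤ Q n v i

/-- The cost of local monotonicity `c_𝒫(n,𝔊)`. -/
noncomputable def costLM {r : ℕ} [NeZero r] (P : Fin r → PowerIndex) (n : ℕ)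
    (𝔊 : GameClass) : ℝ :=
  sInf {β : ℝ | β ∈ Set.Icc (0 : ℝ) 1 ∧
    ∀ α ∈ stdSimplex ℝ (Fin r), β ≤ α 0 → LMon 𝔊 n (convexComb α P)}

/-- The raw Banzhaf index as a power index. -/
noncomputable def BzPI : PowerIndex := fun _ v i => (v.Bz i : ℝ)

/-- The raw Public Good index as a power index. -/
noncomputable def PGIPI : PowerIndex := fun _ v i => (v.PGI i : ℝ)

/-- The raw Shift index as a power index. -/
noncomputable def ShiftPI : PowerIndex := fun _ v i => (v.ShiftIdx i : ℝ)

/-- The raw Johnston index as a power index. -/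
noncomputable def JoPI : PowerIndex := fun _ v i => v.Jo i

/-- The raw Deegan-Packel index as a power index. -/
noncomputable def DPPI : PowerIndex := fun _ v i => v.DP i

/-- `𝔚`: the class of weighted games. -/
def WeightedClass : GameClass := fun _ => {v | v.IsWeighted}

lemma exists_mwc_subset {n : ℕ} (v : SimpleGame n) :
    ∀ S : Finset (Fin n), v.win S = true → ∃ U, U ⊆ S ∧ v.IsMWC U := by
  intro S
  induction S using Finset.strongInduction with
  | _ S ih =>
    intro hS
    by_cases h : ∀ T ⊂ S, v.win T = false
    · exact ⟨S, subset_rfl, hS, h⟩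
    · push_neg at h
      obtain ⟨T, hT, hTw⟩ := h
      obtain ⟨U, hU, hUm⟩ := ih T hT (by simpa using hTw)
      exact ⟨U, hU.trans hT.subset, hUm⟩

/-- For a uniform complete simple game, the raw Public Good index
satisfies the dominance property. -/
theorem pgi_dominance_of_uniform_complete {n : ℕ} (v : SimpleGame n)
    (hcomp : v.IsComplete) (huni : v.IsUniform) (i j : Fin n)
    (hdom : v.Dominates i j) : v.PGI j ≤ v.PGI i := by
  by_cases hij : i = j
  · subst hij; exact le_refl _
  have hrw : ∀ S : Finset (Fin n), (S ∪ {i}) \ {j} = (insert i S).erase j := by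
    intro S; rw [Finset.union_comm, ← Finset.insert_eq, ← Finset.erase_eq]
  classical
  set f : Finset (Fin n) → Finset (Fin n) :=
    fun S => if i ∈ S then S else (insert i S).erase j with hf
  apply Finset.card_le_card_of_injOn f
  · intro S hS
    simp only [SimpleGame.Mset, Finset.mem_coe, Finset.mem_filter, Finset.mem_univ, true_and] at hS ⊢
    obtain ⟨hSm, hjS⟩ := hS
    by_cases hiS : i ∈ S
    · simp only [hf, if_pos hiS]
      exact ⟨hSm, hiS⟩
    · simp only [hf, if_neg hiS]
      set T := (insert i S).erase j with hT
      have hwinT : v.win T = true := by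
        have h := hdom S hjS hiS
        rw [hSm.1, hrw S] at h
        exact top_le_iff.mp h
      have hcardT : T.card = S.card := by
        rw [hT, Finset.card_erase_of_mem (Finset.mem_insert_of_mem hjS),
          Finset.card_insert_of_notMem hiS, Nat.add_sub_cancel]
      obtain ⟨U, hUsub, hUm⟩ := exists_mwc_subset v T hwinT
      have hUcard : U.card = S.card := huni U S hUm hSm
      have hUT : U = T := Finset.eq_of_subset_of_card_le hUsub (by omega)
      refine ⟨hUT ▸ hUm, ?_⟩
      exact Finset.mem_erase.mpr ⟨fun h => hij h, Finset.mem_insert_self i S⟩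
  · intro S hS S' hS' heq
    simp only [SimpleGame.Mset, Finset.coe_filter, Set.mem_setOf_eq, Finset.mem_univ,
      true_and] at hS hS'
    by_cases hiS : i ∈ S <;> by_cases hiS' : i ∈ S' <;>
      simp only [hf, if_pos, if_neg, hiS, hiS', if_true, if_false] at heq
    · exact heq
    · exfalso
      have : j ∈ (insert i S').erase j := heq ▸ hS.2
      exact (Finset.notMem_erase j _) this
    · exfalso
      have : j ∈ (insert i S).erase j := heq.symm ▸ hS'.2
      exact (Finset.notMem_erase j _) this
    · have h1 : insert i S = insert i S' := by
        have := congrArg (insert j) heq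
        rwa [Finset.insert_erase (Finset.mem_insert_of_mem hS.2),
          Finset.insert_erase (Finset.mem_insert_of_mem hS'.2)] at this
      have := congrArg (fun X => Finset.erase X i) h1
      simpa [Finset.erase_insert hiS, Finset.erase_insert hiS'] using this
end

section
/- Let v be a uniform complete simple game on N = {1,…,n}. Then the raw Deegan-Packel index satisfies the dominance property on v: for all players i, j with i ⊒ j one has DP^r_i(v) ≥ DP^r_j(v). -/
open scoped Classical

namespace SimpleGame

lemma exists_mwc_subset {n : ℕ} (v : SimpleGame n) :
    ∀ S, v.win S = true → ∃ W, W ⊆ S ∧ v.IsMWC W := by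
  intro S
  induction S using Finset.strongInduction with
  | _ S ih =>
    intro hS
    by_cases h : ∀ T ⊂ S, v.win T = false
    · exact ⟨S, subset_rfl, hS, h⟩
    · push_neg at h
      obtain ⟨T, hT, hw⟩ := h
      obtain ⟨W, hWT, hW⟩ := ih T hT (by simpa using hw)
      exact ⟨W, hWT.trans hT.subset, hW⟩

end SimpleGame

set_option maxHeartbeats 1600000 in
/-- For a uniform complete simple game, the raw Deegan-Packel index
satisfies the dominance property. -/
theorem dp_dominance_of_uniform_complete {n : ℕ} (v : SimpleGame n)
    (hcomp : v.IsComplete) (huni : v.IsUniform) (i j : Fin n)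
    (hdom : v.Dominates i j) : v.DP j ≤ v.DP i := by
  classical
  by_cases hij : i = j
  · subst hij; exact le_refl _
  set φ : Finset (Fin n) → Finset (Fin n) :=
    fun S => if i ∈ S then S else (S ∪ {i}) \ {j} with hφ
  have hmem : ∀ S, S ∈ v.Mset j ↔ v.IsMWC S ∧ j ∈ S := by
    intro S; simp [SimpleGame.Mset]
  have hmemi : ∀ S, S ∈ v.Mset i ↔ v.IsMWC S ∧ i ∈ S := by
    intro S; simp [SimpleGame.Mset]
  have hcardT : ∀ S : Finset (Fin n), j ∈ S → i ∉ S → ((S ∪ {i}) \ {j}).card = S.card := by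
    intro S hjS hi
    rw [Finset.card_sdiff_of_subset (by simp [hjS]),
      Finset.card_union_of_disjoint (by simp [hi])]
    simp
  have hcard : ∀ S ∈ v.Mset j, (φ S).card = S.card := by
    intro S hS
    obtain ⟨hmwc, hjS⟩ := (hmem S).1 hS
    by_cases hi : i ∈ S
    · simp [hφ, hi]
    · simp only [hφ, if_neg hi]
      exact hcardT S hjS hi
  have hφmem : ∀ S ∈ v.Mset j, φ S ∈ v.Mset i := by
    intro S hS
    obtain ⟨hmwc, hjS⟩ := (hmem S).1 hS
    by_cases hi : i ∈ S
    · rw [hmemi]; simp [hφ, hi, hmwc]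
    · have hwin : v.win ((S ∪ {i}) \ {j}) = true := by
        have h := hdom S hjS hi
        rw [hmwc.1] at h
        exact le_antisymm (Bool.le_true _) h
      obtain ⟨W, hWsub, hW⟩ := v.exists_mwc_subset _ hwin
      have hWT : W = (S ∪ {i}) \ {j} :=
        Finset.eq_of_subset_of_card_le hWsub
          (by rw [huni W S hW hmwc, hcardT S hjS hi])
      rw [hmemi]
      refine ⟨by simp only [hφ, if_neg hi]; rw [← hWT]; exact hW, ?_⟩
      simp [hφ, hi, hij]
  have hjφ : ∀ S ∈ v.Mset j, (j ∈ φ S ↔ i ∈ S) := by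
    intro S hS
    obtain ⟨hmwc, hjS⟩ := (hmem S).1 hS
    by_cases hi : i ∈ S
    · simp [hφ, hi, hjS]
    · simp [hφ, hi]
  have hinj : ∀ S ∈ v.Mset j, ∀ S' ∈ v.Mset j, φ S = φ S' → S = S' := by
    intro S hS S' hS' heq
    obtain ⟨hmwc, hjS⟩ := (hmem S).1 hS
    obtain ⟨hmwc', hjS'⟩ := (hmem S').1 hS'
    have hiff : (i ∈ S) ↔ (i ∈ S') := by
      rw [← hjφ S hS, ← hjφ S' hS', heq]
    by_cases hi : i ∈ S
    · have hi' : i ∈ S' := hiff.1 hi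
      simpa [hφ, hi, hi'] using heq
    · have hi' : i ∉ S' := fun h => hi (hiff.2 h)
      simp only [hφ, if_neg hi, if_neg hi'] at heq
      ext x
      by_cases hx : x = j
      · simp [hx, hjS, hjS']
      · have := Finset.ext_iff.1 heq x
        simp only [Finset.mem_sdiff, Finset.mem_union, Finset.mem_singleton] at this
        by_cases hxi : x = i
        · simp [hxi, hi, hi']
        · constructor
          · intro h; rcases (this.1 ⟨Or.inl h, hx⟩).1 with h' | h'
            exacts [h', absurd h' hxi]
          · intro h; rcases (this.2 ⟨Or.inl h, hx⟩).1 with h' | h'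
            exacts [h', absurd h' hxi]
  unfold SimpleGame.DP
  calc ∑ S ∈ v.Mset j, (1 : ℝ) / (S.card : ℝ)
      = ∑ S ∈ v.Mset j, (1 : ℝ) / (((φ S).card : ℕ) : ℝ) :=
        Finset.sum_congr rfl fun S hS => by rw [hcard S hS]
    _ = ∑ T ∈ (v.Mset j).image φ, (1 : ℝ) / (T.card : ℝ) :=
        by rw [Finset.sum_image hinj]
    _ ≤ ∑ T ∈ v.Mset i, (1 : ℝ) / (T.card : ℝ) := by
        refine Finset.sum_le_sum_of_subset_of_nonneg ?_ ?_
        · intro T hT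
          obtain ⟨S, hS, rfl⟩ := Finset.mem_image.1 hT
          exact hφmem S hS
        · intro T _ _; positivity
end

section
/- Let v be a flat complete simple game on N = {1,…,n}. Then the raw Public Good index satisfies the dominance property on v: for all players i, j with i ⊒ j one has PGI^r_i(v) ≥ PGI^r_j(v). -/
open scoped Classical

/-- The layer relation `i ≿ j`: for every `k = 1,…,n` the partial sums
`Σ_{l=1}^k |M_i(l)|` dominate those of `j`. -/
def SimpleGame.LayerGE {n : ℕ} (v : SimpleGame n) (i j : Fin n) : Prop :=
  ∀ k ∈ Finset.Icc 1 n,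
    ∑ l ∈ Finset.Icc 1 k, (v.Mlset j l).card ≤ ∑ l ∈ Finset.Icc 1 k, (v.Mlset i l).card

/-- The game is flat if any two players are comparable under the layer relation. -/
def SimpleGame.IsFlat {n : ℕ} (v : SimpleGame n) : Prop :=
  ∀ i j : Fin n, v.LayerGE i j ∨ v.LayerGE j i
section PGIAux

open Finset

variable {n : ℕ}

lemma aux_exists_mwc (v : SimpleGame n) :
    ∀ S : Finset (Fin n), v.win S = true → ∃ T, T ⊆ S ∧ v.IsMWC T := by
  intro S
  induction S using Finset.strongInductionOn with
  | _ S ih =>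
    intro hS
    by_cases h : ∀ T ⊂ S, v.win T = false
    · exact ⟨S, Finset.Subset.rfl, hS, h⟩
    · push_neg at h
      obtain ⟨T, hTS, hT⟩ := h
      obtain ⟨U, hUT, hU⟩ := ih T hTS (by simpa using hT)
      exact ⟨U, hUT.trans hTS.subset, hU⟩

lemma aux_card_pos (v : SimpleGame n) {p : Fin n} {S : Finset (Fin n)}
    (h : S ∈ v.Mset p) : 1 ≤ S.card := by
  rcases Finset.mem_filter.mp h with ⟨-, ⟨hw, -⟩, -⟩
  rcases Finset.eq_empty_or_nonempty S with rfl | hne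
  · rw [v.win_empty] at hw; cases hw
  · exact Finset.card_pos.mpr hne

lemma aux_sum_mlset (v : SimpleGame n) (p : Fin n) (k : ℕ) :
    ∑ l ∈ Finset.Icc 1 k, (v.Mlset p l).card
      = ((v.Mset p).filter fun S => S.card ≤ k).card := by
  have hdisj : ∀ x ∈ Finset.Icc 1 k, ∀ y ∈ Finset.Icc 1 k, x ≠ y →
      Disjoint (v.Mlset p x) (v.Mlset p y) := by
    intro x _ y _ hxy
    rw [Finset.disjoint_left]
    intro S hSx hSy
    rcases Finset.mem_filter.mp hSx with ⟨-, h1⟩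
    rcases Finset.mem_filter.mp hSy with ⟨-, h2⟩
    exact hxy (h1.symm.trans h2)
  rw [← Finset.card_biUnion hdisj]
  congr 1
  ext S
  simp only [Finset.mem_biUnion, Finset.mem_Icc, SimpleGame.Mlset, Finset.mem_filter]
  constructor
  · rintro ⟨l, ⟨h1, h2⟩, hS, rfl⟩; exact ⟨hS, h2⟩
  · rintro ⟨hS, hk⟩; exact ⟨S.card, ⟨aux_card_pos v hS, hk⟩, hS, rfl⟩

lemma aux_swap {i j : Fin n} (hij : i ≠ j) {S : Finset (Fin n)}
    (hj : j ∈ S) (hi : i ∉ S) :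
    ((S ∪ {i}) \ {j}).card = S.card ∧ i ∈ (S ∪ {i}) \ {j} ∧ j ∉ (S ∪ {i}) \ {j} ∧
      (((S ∪ {i}) \ {j}) ∪ {j}) \ {i} = S := by
  refine ⟨?_, ?_, ?_, ?_⟩
  · rw [Finset.union_comm, ← Finset.insert_eq, Finset.sdiff_singleton_eq_erase,
      Finset.card_erase_of_mem (Finset.mem_insert_of_mem hj),
      Finset.card_insert_of_notMem hi]; omega
  · simp [hij]
  · simp
  · ext x
    by_cases hxi : x = i <;> by_cases hxj : x = j <;>
      simp [hxi, hxj, hij, hij.symm, hj, hi]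

lemma aux_psi_sub {i j : Fin n} {S T : Finset (Fin n)} (hj : j ∈ S)
    (hT : T ⊆ (S ∪ {i}) \ {j}) : (T ∪ {j}) \ {i} ⊆ S := by
  intro x hx
  rcases Finset.mem_sdiff.mp hx with ⟨hx1, hx2⟩
  rcases Finset.mem_union.mp hx1 with hxT | hxj
  · rcases Finset.mem_sdiff.mp (hT hxT) with ⟨h3, -⟩
    rcases Finset.mem_union.mp h3 with h | h
    · exact h
    · exact absurd h (by simpa using hx2)
  · exact (Finset.mem_singleton.mp hxj) ▸ hj

end PGIAux

/-- For a flat complete simple game, the raw Public Good index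
satisfies the dominance property. -/
theorem pgi_dominance_of_flat_complete {n : ℕ} (v : SimpleGame n)
    (hcomp : v.IsComplete) (hflat : v.IsFlat) (i j : Fin n)
    (hdom : v.Dominates i j) : v.PGI j ≤ v.PGI i := by
  classical
  by_cases hij : i = j
  · subst hij; exact le_rfl
  have hn : 1 ≤ n := i.pos
  have hcard_le : ∀ S : Finset (Fin n), S.card ≤ n := fun S => by
    simpa using Finset.card_le_card (Finset.subset_univ S)
  have hsum : ∀ p : Fin n, ∑ l ∈ Finset.Icc 1 n, (v.Mlset p l).card = v.PGI p := by
    intro p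
    rw [aux_sum_mlset]
    unfold SimpleGame.PGI
    congr 1
    exact Finset.filter_true_of_mem (fun S _ => hcard_le S)
  rcases hflat i j with h | h
  · have := h n (Finset.mem_Icc.mpr ⟨hn, le_rfl⟩)
    rwa [hsum i, hsum j] at this
  · -- h : LayerGE j i; show the PGIs are in fact equal.
    have hwin : ∀ S : Finset (Fin n), j ∈ S → i ∉ S → v.win S = true →
        v.win ((S ∪ {i}) \ {j}) = true := fun S hjS hiS hw => hdom S hjS hiS hw
    -- injectivity of the swap map on coalitions containing j but not i
    have hinj : ∀ k : ℕ, Set.InjOn (fun S : Finset (Fin n) => (S ∪ {i}) \ {j})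
        (((v.Mset j).filter (fun S => S.card ≤ k ∧ i ∉ S) : Finset (Finset (Fin n))) : Set (Finset (Fin n))) := by
      intro k S₁ hS₁ S₂ hS₂ heq
      rcases Finset.mem_filter.mp (Finset.mem_coe.mp hS₁) with ⟨hM₁, -, hi₁⟩
      rcases Finset.mem_filter.mp (Finset.mem_coe.mp hS₂) with ⟨hM₂, -, hi₂⟩
      rcases Finset.mem_filter.mp hM₁ with ⟨-, -, hj₁⟩
      rcases Finset.mem_filter.mp hM₂ with ⟨-, -, hj₂⟩
      have e₁ := (aux_swap hij hj₁ hi₁).2.2.2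
      have e₂ := (aux_swap hij hj₂ hi₂).2.2.2
      calc S₁ = (((S₁ ∪ {i}) \ {j}) ∪ {j}) \ {i} := e₁.symm
        _ = (((S₂ ∪ {i}) \ {j}) ∪ {j}) \ {i} := by
          rw [show (S₁ ∪ {i}) \ {j} = (S₂ ∪ {i}) \ {j} from heq]
        _ = S₂ := e₂
    -- the common part of M_i and M_j
    have hcommon : ∀ k : ℕ, (v.Mset j).filter (fun S => S.card ≤ k ∧ i ∈ S)
        = (v.Mset i).filter (fun S => S.card ≤ k ∧ j ∈ S) := by
      intro k
      ext S
      simp only [SimpleGame.Mset, Finset.filter_filter, Finset.mem_filter,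
        Finset.mem_univ, true_and]
      tauto
    have hsplit : ∀ (k : ℕ) (p q : Fin n),
        ((v.Mset p).filter (fun S => S.card ≤ k)).card
          = ((v.Mset p).filter (fun S => S.card ≤ k ∧ q ∈ S)).card
            + ((v.Mset p).filter (fun S => S.card ≤ k ∧ q ∉ S)).card := by
      intro k p q
      rw [← Finset.card_filter_add_card_filter_not
        (s := (v.Mset p).filter (fun S => S.card ≤ k)) (p := fun S => q ∈ S)]
      congr 1 <;> rw [Finset.filter_filter]
    have hAB : ∀ k : ℕ, k ≤ n →
        ((v.Mset i).filter (fun S => S.card ≤ k ∧ j ∉ S)).card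
          ≤ ((v.Mset j).filter (fun S => S.card ≤ k ∧ i ∉ S)).card := by
      intro k hkn
      rcases Nat.eq_zero_or_pos k with rfl | hk
      · have hempty : ((v.Mset i).filter (fun S => S.card ≤ 0 ∧ j ∉ S)) = ∅ := by
          rw [Finset.filter_eq_empty_iff]
          rintro S hS ⟨h1, -⟩
          have := aux_card_pos v hS
          omega
        rw [hempty]
        simp
      · have hlayer := h k (Finset.mem_Icc.mpr ⟨hk, hkn⟩)
        rw [aux_sum_mlset, aux_sum_mlset] at hlayer
        have e1 := hsplit k i j
        have e2 := hsplit k j i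
        have e3 := congrArg Finset.card (hcommon k)
        omega
    have key : ∀ k : ℕ, k ≤ n →
        (v.Mset i).filter (fun S => S.card ≤ k ∧ j ∉ S)
          = ((v.Mset j).filter (fun S => S.card ≤ k ∧ i ∉ S)).image
              (fun S => (S ∪ {i}) \ {j}) := by
      intro k
      induction k using Nat.strong_induction_on with
      | _ k ih =>
        intro hkn
        have himage : ∀ S ∈ (v.Mset j).filter (fun S => S.card ≤ k ∧ i ∉ S),
            (S ∪ {i}) \ {j} ∈ (v.Mset i).filter (fun S => S.card ≤ k ∧ j ∉ S) := by
          intro S hS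
          rcases Finset.mem_filter.mp hS with ⟨hSM, hSk, hiS⟩
          rcases Finset.mem_filter.mp hSM with ⟨-, ⟨hSw, hSmin⟩, hjS⟩
          obtain ⟨hcardφ, hiφ, hjφ, hψφ⟩ := aux_swap hij hjS hiS
          have hφw : v.win ((S ∪ {i}) \ {j}) = true := hwin S hjS hiS hSw
          have hφmin : ∀ T ⊂ (S ∪ {i}) \ {j}, v.win T = false := by
            intro T hTss
            by_contra hTw
            have hTw : v.win T = true := by simpa using hTw
            obtain ⟨U, hUT, hUmwc⟩ := aux_exists_mwc v T hTw
            have hUφ : U ⊂ (S ∪ {i}) \ {j} := lt_of_le_of_lt hUT hTss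
            have hjU : j ∉ U := fun hjU =>
              (Finset.mem_sdiff.mp (hUφ.subset hjU)).2 (Finset.mem_singleton.mpr rfl)
            have hiU : i ∈ U := by
              by_contra hiU
              have hUS : U ⊆ S := by
                intro x hx
                rcases Finset.mem_sdiff.mp (hUφ.subset hx) with ⟨h1, -⟩
                rcases Finset.mem_union.mp h1 with hh | hh
                · exact hh
                · exact absurd ((Finset.mem_singleton.mp hh) ▸ hx) hiU
              have hUSs : U ⊂ S :=
                hUS.ssubset_of_ne (by rintro rfl; exact hjU hjS)
              have := hSmin U hUSs
              rw [hUmwc.1] at this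
              cases this
            have hUcard : U.card < k := by
              have h1 : U.card < ((S ∪ {i}) \ {j}).card := Finset.card_lt_card hUφ
              rw [hcardφ] at h1
              omega
            have hUmem : U ∈ (v.Mset i).filter (fun S => S.card ≤ U.card ∧ j ∉ S) :=
              Finset.mem_filter.mpr ⟨Finset.mem_filter.mpr
                ⟨Finset.mem_univ _, hUmwc, hiU⟩, le_rfl, hjU⟩
            rw [ih U.card hUcard (le_trans (le_of_lt hUcard) hkn)] at hUmem
            rcases Finset.mem_image.mp hUmem with ⟨S₁, hS₁, hφS₁⟩
            rcases Finset.mem_filter.mp hS₁ with ⟨hS₁M, -, hiS₁⟩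
            rcases Finset.mem_filter.mp hS₁M with ⟨-, hS₁mwc, hjS₁⟩
            have hS₁sub : S₁ ⊆ S := by
              have hψ := aux_psi_sub (i := i) hjS hUφ.subset
              rw [← hφS₁, (aux_swap hij hjS₁ hiS₁).2.2.2] at hψ
              exact hψ
            have hS₁card : S₁.card < S.card := by
              have h1 : U.card < ((S ∪ {i}) \ {j}).card := Finset.card_lt_card hUφ
              have h2 := (aux_swap hij hjS₁ hiS₁).1
              rw [hφS₁] at h2
              omega
            have hS₁ss : S₁ ⊂ S :=
              hS₁sub.ssubset_of_ne (by rintro rfl; omega)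
            have := hSmin S₁ hS₁ss
            rw [hS₁mwc.1] at this
            cases this
          refine Finset.mem_filter.mpr ⟨Finset.mem_filter.mpr
            ⟨Finset.mem_univ _, ⟨hφw, hφmin⟩, hiφ⟩, ?_, hjφ⟩
          rw [hcardφ]; exact hSk
        refine (Finset.eq_of_subset_of_card_le ?_ ?_).symm
        · exact Finset.image_subset_iff.mpr himage
        · rw [Finset.card_image_of_injOn (hinj k)]
          exact hAB k hkn
    have hfilt : ∀ p : Fin n, ((v.Mset p).filter fun S => S.card ≤ n) = v.Mset p :=
      fun p => Finset.filter_true_of_mem (fun S _ => hcard_le S)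
    have e1 := hsplit n i j
    have e2 := hsplit n j i
    rw [hfilt] at e1 e2
    have e3 := congrArg Finset.card (hcommon n)
    have e4 : ((v.Mset i).filter (fun S => S.card ≤ n ∧ j ∉ S)).card
        = ((v.Mset j).filter (fun S => S.card ≤ n ∧ i ∉ S)).card := by
      rw [key n le_rfl, Finset.card_image_of_injOn (hinj n)]
    unfold SimpleGame.PGI
    omega
end

section
/- Let 𝒫 = (P^1,…,P^r) be a collection of power indices, defined on games with any number of players, such that P^1 satisfies local monotonicity and every P^h is invariant for nulls, and let 𝔊 be a class of weighted games closed under the addition of null players. Then c_𝒫(n,𝔊) ≤ c_𝒫(n+1,𝔊) for all positive integers n. -/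
open scoped Classical

/-- The game obtained from `v` by adding a null player (as the new last player):
a coalition wins iff its old players form a winning coalition of `v`. -/
def SimpleGame.extNull {n : ℕ} (v : SimpleGame n) : SimpleGame (n + 1) where
  win S := v.win (Finset.univ.filter fun i : Fin n => i.castSucc ∈ S)
  win_empty := by simpa using v.win_empty
  win_univ := by simpa using v.win_univ
  win_mono := by
    intro S T hST h
    refine v.win_mono (fun i hi => ?_) h
    simp only [Finset.mem_filter] at *
    exact ⟨hi.1, hST hi.2⟩

/-- `P` is invariant for nulls: the added null player gets power `0` and the
power of every other player is unchanged when a null player is deleted. -/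
def InvariantForNulls (P : PowerIndex) : Prop :=
  ∀ (n : ℕ) (v : SimpleGame n),
    P (n + 1) v.extNull (Fin.last n) = 0 ∧
    ∀ j : Fin n, P (n + 1) v.extNull j.castSucc = P n v j

lemma extNull_dominates {n : ℕ} (v : SimpleGame n) {i j : Fin n}
    (hd : v.Dominates i j) :
    v.extNull.Dominates i.castSucc j.castSucc := by
  intro S hjS hiS
  have hfil : (Finset.univ.filter fun k : Fin n =>
      k.castSucc ∈ (S ∪ {i.castSucc}) \ {j.castSucc})
      = ((Finset.univ.filter fun k : Fin n => k.castSucc ∈ S) ∪ {i}) \ {j} := by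
    ext k
    simp only [Finset.mem_filter, Finset.mem_sdiff, Finset.mem_union,
      Finset.mem_singleton, Finset.mem_univ, true_and, Fin.castSucc_inj]
  have hj' : j ∈ Finset.univ.filter fun k : Fin n => k.castSucc ∈ S := by
    simp [hjS]
  have hi' : i ∉ Finset.univ.filter fun k : Fin n => k.castSucc ∈ S := by
    simp [hiS]
  have := hd _ hj' hi'
  simp only [SimpleGame.extNull]
  rw [hfil]
  exact this

lemma convexComb_eq_P0 {r : ℕ} [NeZero r] (P : Fin r → PowerIndex)
    {α : Fin r → ℝ} (hα : α ∈ stdSimplex ℝ (Fin r)) (h1 : 1 ≤ α 0)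
    (m : ℕ) (v : SimpleGame m) (i : Fin m) :
    convexComb α P m v i = P 0 m v i := by
  have hsum : ∑ h, α h = 1 := hα.2
  have hnn := hα.1
  have hzero : ∀ h : Fin r, h ≠ 0 → α h = 0 := by
    intro h hh
    by_contra hne
    have hpos : 0 < α h := lt_of_le_of_ne (hnn h) (Ne.symm hne)
    have : α 0 + α h ≤ ∑ g, α g := by
      have : ({0, h} : Finset (Fin r)) ⊆ Finset.univ := Finset.subset_univ _
      calc α 0 + α h = ∑ g ∈ {0, h}, α g := by
            rw [Finset.sum_pair (Ne.symm hh)]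
        _ ≤ ∑ g, α g := Finset.sum_le_sum_of_subset_of_nonneg this
            (fun g _ _ => hnn g)
    rw [hsum] at this
    linarith
  have ha0 : α 0 = 1 := by
    have : α 0 ≤ ∑ g, α g := Finset.single_le_sum (fun g _ => hnn g)
      (Finset.mem_univ 0)
    rw [hsum] at this; linarith
  unfold convexComb
  rw [Finset.sum_eq_single 0 (fun h _ hh => by rw [hzero h hh]; ring)
    (fun h => absurd (Finset.mem_univ 0) h)]
  rw [ha0]; ring

/-- if all the power indices of `𝒫` are invariant for nulls and the
class `𝔊` of weighted games is closed under the addition of null players, then the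
cost of local monotonicity is monotone in the number of players. -/
theorem costLM_mono_players {r : ℕ} [NeZero r] (𝔊 : GameClass)
    (h𝔊 : ∀ m, ∀ v ∈ 𝔊 m, v.IsWeighted)
    (hclosed : ∀ m, ∀ v ∈ 𝔊 m, v.extNull ∈ 𝔊 (m + 1))
    (P : Fin r → PowerIndex) (hP1 : ∀ m, LMon 𝔊 m (P 0))
    (hinv : ∀ h, InvariantForNulls (P h)) (n : ℕ) (hn : 0 < n) :
    costLM P n 𝔊 ≤ costLM P (n + 1) 𝔊 := by
  unfold costLM
  apply csInf_le_csInf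
  · exact ⟨0, fun b hb => hb.1.1⟩
  · refine ⟨1, ⟨zero_le_one, le_refl _⟩, fun α hα h1 v hv i j hdom => ?_⟩
    rw [convexComb_eq_P0 P hα h1, convexComb_eq_P0 P hα h1]
    exact hP1 (n + 1) v hv i j hdom
  · rintro β ⟨hβI, hβ⟩
    refine ⟨hβI, fun α hα hle v hv i j hdom => ?_⟩
    have hdom' := extNull_dominates v hdom
    have hkey := hβ α hα hle v.extNull (hclosed n v hv)
      i.castSucc j.castSucc hdom'
    have heq : ∀ k : Fin n,
        convexComb α P (n + 1) v.extNull k.castSucc = convexComb α P n v k := by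
      intro k
      unfold convexComb
      exact Finset.sum_congr rfl fun h _ => by rw [(hinv h n v).2 k]
    rw [heq i, heq j] at hkey
    exact hkey
end

section
/- Let 𝔊 be a class of weighted games, n a positive integer, and 𝒫 = (P^1,…,P^r) with r ≥ 2 a collection of power indices on 𝔊 such that P^1 satisfies local monotonicity. Then c_𝒫(n,𝔊) = max{ c_{(P^1,P^j)}(n,𝔊) : 2 ≤ j ≤ r }. -/
open scoped Classical

/-- The defining set of `costLM`. -/
private def Aset {r : ℕ} [NeZero r] (P : Fin r → PowerIndex) (n : ℕ)
    (𝔊 : GameClass) : Set ℝ :=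
  {β : ℝ | β ∈ Set.Icc (0 : ℝ) 1 ∧
    ∀ α ∈ stdSimplex ℝ (Fin r), β ≤ α 0 → LMon 𝔊 n (convexComb α P)}

private lemma costLM_eq_sInf_Aset {r : ℕ} [NeZero r] (P : Fin r → PowerIndex) (n : ℕ)
    (𝔊 : GameClass) : costLM P n 𝔊 = sInf (Aset P n 𝔊) := rfl

private lemma Aset_bddBelow {r : ℕ} [NeZero r] (P : Fin r → PowerIndex) (n : ℕ)
    (𝔊 : GameClass) : BddBelow (Aset P n 𝔊) := ⟨0, fun _ hβ => hβ.1.1⟩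

private lemma Aset_up {r : ℕ} [NeZero r] {P : Fin r → PowerIndex} {n : ℕ}
    {𝔊 : GameClass} {γ β : ℝ} (hγ : γ ∈ Aset P n 𝔊) (h : γ ≤ β) (hβ : β ≤ 1) :
    β ∈ Aset P n 𝔊 :=
  ⟨⟨hγ.1.1.trans h, hβ⟩, fun α hα h0 => hγ.2 α hα (h.trans h0)⟩

private lemma one_mem_Aset {r : ℕ} [NeZero r] {P : Fin r → PowerIndex} {n : ℕ}
    {𝔊 : GameClass} (hP : LMon 𝔊 n (P 0)) : (1 : ℝ) ∈ Aset P n 𝔊 := by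
  refine ⟨⟨zero_le_one, le_refl 1⟩, fun α hα h1 v hv i j hd => ?_⟩
  have hz : ∀ h : Fin r, h ≠ 0 → α h = 0 := by
    have hsum : ∑ h ∈ Finset.univ.erase 0, α h + α 0 = 1 := by
      rw [Finset.sum_erase_add _ _ (Finset.mem_univ 0)]; exact hα.2
    have hnn : 0 ≤ ∑ h ∈ Finset.univ.erase 0, α h :=
      Finset.sum_nonneg fun h _ => hα.1 h
    have h0 : ∑ h ∈ Finset.univ.erase 0, α h = 0 := by linarith
    intro h hh
    have := (Finset.sum_eq_zero_iff_of_nonneg (fun k _ => hα.1 k)).1 h0 h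
      (Finset.mem_erase.2 ⟨hh, Finset.mem_univ h⟩)
    exact this
  have heval : ∀ x : Fin n, convexComb α P n v x = α 0 * P 0 n v x := by
    intro x
    show ∑ h, α h * P h n v x = α 0 * P 0 n v x
    rw [← Finset.sum_erase_add _ _ (Finset.mem_univ 0),
      Finset.sum_eq_zero (fun h hh => by
        rw [hz h (Finset.mem_erase.1 hh).1, zero_mul]), zero_add]
  rw [heval i, heval j]
  exact mul_le_mul_of_nonneg_left (hP v hv i j hd) (hα.1 0)

private lemma pair_eval {P0 Pj : PowerIndex} (α : Fin 2 → ℝ) (n : ℕ) (v : SimpleGame n)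
    (x : Fin n) : convexComb α ![P0, Pj] n v x = α 0 * P0 n v x + α 1 * Pj n v x := by
  simp [convexComb, Fin.sum_univ_two]

private lemma mem_Aset_iff {r : ℕ} [NeZero r] {P : Fin r → PowerIndex} {n : ℕ}
    {𝔊 : GameClass} (hP1 : LMon 𝔊 n (P 0)) (β : ℝ) :
    β ∈ Aset P n 𝔊 ↔ (β ∈ Set.Icc (0 : ℝ) 1 ∧
      ∀ j : Fin r, j ≠ 0 → β ∈ Aset ![P 0, P j] n 𝔊) := by
  constructor
  · rintro ⟨hIcc, hβ⟩
    refine ⟨hIcc, fun j hj => ⟨hIcc, fun α hα h0 v hv i i' hd => ?_⟩⟩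
    set α' : Fin r → ℝ := fun h => if h = 0 then α 0 else if h = j then α 1 else 0 with hα'def
    have hα'j : α' j = α 1 := by simp [hα'def, hj]
    have hα'0 : α' 0 = α 0 := by simp [hα'def]
    have herase : ∀ x ∈ Finset.univ.erase (0 : Fin r), x ≠ j → α' x = 0 := by
      intro x hx hxj
      simp [hα'def, (Finset.mem_erase.1 hx).1, hxj]
    have hsumer : ∑ h ∈ Finset.univ.erase (0 : Fin r), α' h = α 1 := by
      rw [Finset.sum_eq_single_of_mem j
        (Finset.mem_erase.2 ⟨hj, Finset.mem_univ j⟩) (fun x hx hxj => herase x hx hxj)]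
      exact hα'j
    have hα'mem : α' ∈ stdSimplex ℝ (Fin r) := by
      constructor
      · intro h
        simp only [hα'def]
        split_ifs
        · exact hα.1 0
        · exact hα.1 1
        · exact le_refl 0
      · rw [← Finset.sum_erase_add _ _ (Finset.mem_univ (0 : Fin r)), hsumer, hα'0]
        have := hα.2
        rw [Fin.sum_univ_two] at this
        linarith
    have := hβ α' hα'mem (by rw [hα'0]; exact h0) v hv i i' hd
    have heval : ∀ x : Fin n, convexComb α' P n v x = convexComb α ![P 0, P j] n v x := by
      intro x
      rw [pair_eval]
      show ∑ h, α' h * P h n v x = _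
      rw [← Finset.sum_erase_add _ _ (Finset.mem_univ (0 : Fin r)),
        Finset.sum_eq_single_of_mem j (Finset.mem_erase.2 ⟨hj, Finset.mem_univ j⟩)
          (fun x hx hxj => by rw [herase x hx hxj, zero_mul]), hα'j, hα'0]
      ring
    rw [← heval i, ← heval i']
    exact this
  · rintro ⟨hIcc, hpair⟩
    refine ⟨hIcc, fun α hα h0 v hv i i' hd => ?_⟩
    set t := α 0 with ht
    have ht1 : t ≤ 1 := by
      rw [← hα.2]; exact Finset.single_le_sum (fun j _ => hα.1 j) (Finset.mem_univ 0)
    have ht0 : 0 ≤ t := hα.1 0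
    have hsumer : ∑ h ∈ Finset.univ.erase (0 : Fin r), α h = 1 - t := by
      have := Finset.sum_erase_add Finset.univ α (Finset.mem_univ (0 : Fin r))
      rw [hα.2] at this; linarith
    show ∑ h, α h * P h n v i' ≤ ∑ h, α h * P h n v i
    by_cases htlt : t < 1
    · have hs : (0:ℝ) < 1 - t := by linarith
      have hpmem : (![t, 1 - t]) ∈ stdSimplex ℝ (Fin 2) := by
        constructor
        · intro h
          fin_cases h
          · simpa using ht0
          · simpa using hs.le
        · simp [Fin.sum_univ_two]
      have key : ∀ h : Fin r, h ≠ 0 →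
          t * P 0 n v i' + (1 - t) * P h n v i' ≤ t * P 0 n v i + (1 - t) * P h n v i := by
        intro h hh
        have := (hpair h hh).2 ![t, 1 - t] hpmem (by simpa using h0) v hv i i' hd
        rwa [pair_eval, pair_eval] at this
      have heval : ∀ x : Fin n, ∑ h, α h * P h n v x =
          ∑ h ∈ Finset.univ.erase (0 : Fin r),
            (α h / (1 - t)) * (t * P 0 n v x + (1 - t) * P h n v x) := by
        intro x
        have hsplit : ∀ h : Fin r,
            (α h / (1 - t)) * (t * P 0 n v x + (1 - t) * P h n v x)
              = (α h / (1 - t)) * (t * P 0 n v x) + α h * P h n v x := by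
          intro h
          field_simp
        rw [Finset.sum_congr rfl (fun h _ => hsplit h), Finset.sum_add_distrib,
          ← Finset.sum_mul, ← Finset.sum_div, hsumer, div_self hs.ne', one_mul,
          ← Finset.sum_erase_add _ _ (Finset.mem_univ (0 : Fin r))]
        ring
      rw [heval i, heval i']
      refine Finset.sum_le_sum fun h hh => ?_
      exact mul_le_mul_of_nonneg_left (key h (Finset.mem_erase.1 hh).1)
        (div_nonneg (hα.1 h) hs.le)
    · have hteq : t = 1 := le_antisymm ht1 (not_lt.1 htlt)
      have hz : ∀ h : Fin r, h ≠ 0 → α h = 0 := by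
        have h0' : ∑ h ∈ Finset.univ.erase (0 : Fin r), α h = 0 := by
          rw [hsumer, hteq]; ring
        intro h hh
        exact (Finset.sum_eq_zero_iff_of_nonneg (fun k _ => hα.1 k)).1 h0' h
          (Finset.mem_erase.2 ⟨hh, Finset.mem_univ h⟩)
      have heval : ∀ x : Fin n, ∑ h, α h * P h n v x = α 0 * P 0 n v x := by
        intro x
        rw [← Finset.sum_erase_add _ _ (Finset.mem_univ (0 : Fin r)),
          Finset.sum_eq_zero (fun h hh => by
            rw [hz h (Finset.mem_erase.1 hh).1, zero_mul]), zero_add]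
      rw [heval i, heval i']
      exact mul_le_mul_of_nonneg_left (hP1 v hv i i' hd) ht0

/-- the cost of local monotonicity of a collection `𝒫 = (P^1,…,P^r)`
(with `r ≥ 2` and `P^1` locally monotonic) equals the maximum of the costs of the
two-element subcollections `(P^1, P^j)`, `2 ≤ j ≤ r`. -/
theorem costLM_eq_max_pairs {r : ℕ} [NeZero r] (hr : 2 ≤ r) (n : ℕ) (hn : 0 < n)
    (𝔊 : GameClass) (h𝔊 : ∀ m, ∀ v ∈ 𝔊 m, v.IsWeighted)
    (P : Fin r → PowerIndex) (hP1 : LMon 𝔊 n (P 0)) :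
    costLM P n 𝔊 =
      Finset.sup' (Finset.univ.filter fun j : Fin r => j ≠ 0)
        ⟨⟨1, by omega⟩, by rw [Finset.mem_filter]; exact ⟨Finset.mem_univ _, fun h => by simpa using congrArg Fin.val h⟩⟩
        (fun j => costLM ![P 0, P j] n 𝔊) := by
  have hj1mem : (⟨1, by omega⟩ : Fin r) ∈ Finset.univ.filter fun j : Fin r => j ≠ 0 := by
    rw [Finset.mem_filter]; exact ⟨Finset.mem_univ _, fun h => by simpa using congrArg Fin.val h⟩
  have hne : (Finset.univ.filter fun j : Fin r => j ≠ 0).Nonempty := ⟨_, hj1mem⟩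
  have h1A : (1 : ℝ) ∈ Aset P n 𝔊 := one_mem_Aset hP1
  have h1Aj : ∀ j : Fin r, (1 : ℝ) ∈ Aset ![P 0, P j] n 𝔊 :=
    fun j => one_mem_Aset (P := ![P 0, P j]) hP1
  have hcj_le_one : ∀ j : Fin r, costLM ![P 0, P j] n 𝔊 ≤ 1 := fun j => by
    rw [costLM_eq_sInf_Aset]; exact csInf_le (Aset_bddBelow _ _ _) (h1Aj j)
  have hcj_nonneg : ∀ j : Fin r, 0 ≤ costLM ![P 0, P j] n 𝔊 := fun j => by
    rw [costLM_eq_sInf_Aset]; exact le_csInf ⟨1, h1Aj j⟩ (fun γ hγ => hγ.1.1)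
  have hc_le_one : costLM P n 𝔊 ≤ 1 := by
    rw [costLM_eq_sInf_Aset]; exact csInf_le (Aset_bddBelow _ _ _) h1A
  have hsup_le_c : Finset.sup' (Finset.univ.filter fun j : Fin r => j ≠ 0) hne (fun j => costLM ![P 0, P j] n 𝔊) ≤ costLM P n 𝔊 := by
    refine Finset.sup'_le _ _ fun j hj => ?_
    have hj0 : j ≠ 0 := (Finset.mem_filter.1 hj).2
    rw [costLM_eq_sInf_Aset, costLM_eq_sInf_Aset]
    refine csInf_le_csInf (Aset_bddBelow _ _ _) ⟨1, h1A⟩ fun β hβ => ?_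
    exact ((mem_Aset_iff hP1 β).1 hβ).2 j hj0
  have hc_le_sup : costLM P n 𝔊 ≤
      Finset.sup' (Finset.univ.filter fun j : Fin r => j ≠ 0) hne (fun j => costLM ![P 0, P j] n 𝔊) := by
    by_contra hlt
    push_neg at hlt
    set M := Finset.sup' (Finset.univ.filter fun j : Fin r => j ≠ 0) hne (fun j => costLM ![P 0, P j] n 𝔊) with hM
    have h1le : costLM ![P 0, P (⟨1, by omega⟩ : Fin r)] n 𝔊 ≤ M := by
      rw [hM]; exact Finset.le_sup' (fun j => costLM ![P 0, P j] n 𝔊) hj1mem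
    have hM0 : 0 ≤ M := le_trans (hcj_nonneg _) h1le
    have hM1 : M ≤ 1 := by rw [hM]; exact Finset.sup'_le _ _ fun j _ => hcj_le_one j
    set β := (M + costLM P n 𝔊) / 2 with hβdef
    have hmβ : M < β := by rw [hβdef]; linarith
    have hβc : β < costLM P n 𝔊 := by rw [hβdef]; linarith
    have hβ1 : β ≤ 1 := by rw [hβdef]; linarith
    have hβ0 : 0 ≤ β := by rw [hβdef]; linarith
    have hβA : β ∈ Aset P n 𝔊 := by
      rw [mem_Aset_iff hP1]
      refine ⟨⟨hβ0, hβ1⟩, fun j hj => ?_⟩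
      have hjm : costLM ![P 0, P j] n 𝔊 ≤ M := by
        have hjmem : j ∈ Finset.univ.filter (fun j : Fin r => j ≠ 0) :=
          Finset.mem_filter.2 ⟨Finset.mem_univ j, hj⟩
        rw [hM]; exact Finset.le_sup' (fun j => costLM ![P 0, P j] n 𝔊) hjmem
      have hlt' : sInf (Aset ![P 0, P j] n 𝔊) < β := by
        rw [← costLM_eq_sInf_Aset]; linarith
      obtain ⟨γ, hγmem, hγβ⟩ := exists_lt_of_csInf_lt ⟨1, h1Aj j⟩ hlt'
      exact Aset_up hγmem hγβ.le hβ1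
    have hfin : costLM P n 𝔊 ≤ β := by
      rw [costLM_eq_sInf_Aset]; exact csInf_le (Aset_bddBelow _ _ _) hβA
    linarith
  exact le_antisymm hc_le_sup hsup_le_c
end

section
/- Let 𝔊 be a class of weighted games, n a positive integer, and 𝒫 = (P^1,…,P^r) with r ≥ 2 a collection of power indices on 𝔊 such that P^1 satisfies local monotonicity. Then the infimum defining the cost of local monotonicity is attained: for every α ∈ 𝕊^r with α_1 ≥ c_𝒫(n,𝔊), the convex combination P^{α} satisfies local monotonicity on the n-player games of 𝔊; i.e., c_𝒫(n,𝔊) = min{β ≥ 0 : P^{α} satisfies LM on the n-player games of 𝔊 for all α ∈ 𝕊^r with α_1 ≥ β}. -/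
open scoped Classical

/-- the infimum defining the cost of local monotonicity is attained:
`P^α` is locally monotonic for every `α ∈ 𝕊^r` with `α_1 ≥ c_𝒫(n,𝔊)`, i.e.
`c_𝒫(n,𝔊)` is the minimum of `{β ≥ 0 : P^α satisfies LM for all α with α_1 ≥ β}`. -/
theorem costLM_attained {r : ℕ} [NeZero r] (hr : 2 ≤ r) (n : ℕ) (hn : 0 < n)
    (𝔊 : GameClass) (h𝔊 : ∀ m, ∀ v ∈ 𝔊 m, v.IsWeighted)
    (P : Fin r → PowerIndex) (hP1 : LMon 𝔊 n (P 0)) :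
    (∀ α ∈ stdSimplex ℝ (Fin r), costLM P n 𝔊 ≤ α 0 → LMon 𝔊 n (convexComb α P)) ∧
    IsLeast {β : ℝ | 0 ≤ β ∧
        ∀ α ∈ stdSimplex ℝ (Fin r), β ≤ α 0 → LMon 𝔊 n (convexComb α P)}
      (costLM P n 𝔊) := by
  set B := {β : ℝ | β ∈ Set.Icc (0 : ℝ) 1 ∧
    ∀ α ∈ stdSimplex ℝ (Fin r), β ≤ α 0 → LMon 𝔊 n (convexComb α P)} with hBdef
  have hcost : costLM P n 𝔊 = sInf B := rfl
  -- sum of the indicator of 0 against P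
  have hδ : ∀ (v : SimpleGame n) (k : Fin n),
      (∑ h : Fin r, (if h = 0 then (1:ℝ) else 0) * P h n v k) = P 0 n v k := by
    intro v k
    rw [Finset.sum_eq_single 0]
    · simp
    · intro b _ hb; simp [hb]
    · simp
  -- if α 0 = 1 then the convex combination is P 0
  have key1 : ∀ α ∈ stdSimplex ℝ (Fin r), (1:ℝ) ≤ α 0 → LMon 𝔊 n (convexComb α P) := by
    intro α hα h1
    have hsum : ∑ h : Fin r, α h = 1 := hα.2
    have hsplit : α 0 + ∑ h ∈ Finset.univ.erase 0, α h = 1 := by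
      rw [Finset.add_sum_erase _ _ (Finset.mem_univ 0)]; exact hsum
    have herase_nonneg : 0 ≤ ∑ h ∈ Finset.univ.erase 0, α h :=
      Finset.sum_nonneg fun x _ => hα.1 x
    have hα0 : α 0 = 1 := le_antisymm (by linarith) h1
    have herase0 : ∑ h ∈ Finset.univ.erase 0, α h = 0 := by linarith
    have hz : ∀ h : Fin r, h ≠ 0 → α h = 0 := by
      intro h hh
      exact (Finset.sum_eq_zero_iff_of_nonneg (fun x _ => hα.1 x)).mp herase0 h
        (Finset.mem_erase.mpr ⟨hh, Finset.mem_univ h⟩)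
    have heq : ∀ (v : SimpleGame n) (k : Fin n), convexComb α P n v k = P 0 n v k := by
      intro v k
      unfold convexComb
      rw [Finset.sum_eq_single 0]
      · rw [hα0, one_mul]
      · intro b _ hb; rw [hz b hb, zero_mul]
      · simp
    intro v hv i j hij
    rw [heq, heq]
    exact hP1 v hv i j hij
  have h1B : (1:ℝ) ∈ B := ⟨⟨zero_le_one, le_refl 1⟩, key1⟩
  have hne : B.Nonempty := ⟨1, h1B⟩
  have hbdd : BddBelow B := ⟨0, fun β hβ => hβ.1.1⟩
  have hc0 : 0 ≤ sInf B := le_csInf hne fun β hβ => hβ.1.1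
  have hc1 : sInf B ≤ 1 := csInf_le hbdd h1B
  -- LM holds strictly above the infimum
  have hlt : ∀ α ∈ stdSimplex ℝ (Fin r), sInf B < α 0 → LMon 𝔊 n (convexComb α P) := by
    intro α hα h
    obtain ⟨β, hβB, hβlt⟩ := exists_lt_of_csInf_lt hne h
    exact hβB.2 α hα (le_of_lt hβlt)
  -- main claim
  have main : ∀ α ∈ stdSimplex ℝ (Fin r), sInf B ≤ α 0 → LMon 𝔊 n (convexComb α P) := by
    intro α hα hle
    rcases lt_or_eq_of_le hle with hlt' | heq
    · exact hlt α hα hlt'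
    · -- α 0 = sInf B
      rcases eq_or_lt_of_le hc1 with h1 | hclt1
      · exact key1 α hα (by rw [← heq]; exact le_of_eq h1.symm)
      · -- sInf B < 1, so α 0 < 1
        have hα01 : α 0 < 1 := by rw [← heq]; exact hclt1
        intro v hv i j hij
        by_contra hcon
        push_neg at hcon
        set Qi := convexComb α P n v i with hQi
        set Qj := convexComb α P n v j with hQj
        set A := P 0 n v j with hA
        set Bv := P 0 n v i with hBv
        have hd : 0 < Qj - Qi := sub_pos.mpr hcon
        set d := Qj - Qi with hddef
        set C := Bv - A with hCdef
        set t := min (1/2 : ℝ) (d / (2*(|C|+1))) with htdef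
        have habs0 : 0 ≤ |C| := abs_nonneg C
        have ht0 : 0 < t := lt_min (by norm_num) (div_pos hd (by positivity))
        have ht2 : t ≤ 1/2 := min_le_left _ _
        have htd : t ≤ d / (2*(|C|+1)) := min_le_right _ _
        have htd' : t * (2*(|C|+1)) ≤ d := by
          rw [← div_mul_cancel₀ d (show (2*(|C|+1)) ≠ 0 by positivity)]
          exact mul_le_mul_of_nonneg_right htd (by positivity)
        -- the perturbed point
        set αt := fun h : Fin r => (1-t)*α h + t*(if h = 0 then (1:ℝ) else 0) with hαtdef
        have hαt : αt ∈ stdSimplex ℝ (Fin r) := by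
          constructor
          · intro x
            have := hα.1 x
            simp only [hαtdef]
            have h1t : 0 ≤ 1 - t := by linarith
            positivity
          · simp only [hαtdef]
            rw [Finset.sum_add_distrib, ← Finset.mul_sum, ← Finset.mul_sum, hα.2]
            have : (∑ h : Fin r, if h = 0 then (1:ℝ) else 0) = 1 := by
              rw [Finset.sum_ite_eq' Finset.univ 0 (fun _ => (1:ℝ))]
              simp
            rw [this]; ring
        have hαt0 : sInf B < αt 0 := by
          have hv0 : αt 0 = (1-t)*α 0 + t := by simp [hαtdef]
          rw [hv0, heq]
          nlinarith [mul_pos ht0 (sub_pos.mpr hα01)]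
        have hLM := hlt αt hαt hαt0 v hv i j hij
        have hsum : ∀ k : Fin n, convexComb αt P n v k
            = (1-t) * convexComb α P n v k + t * P 0 n v k := by
          intro k
          unfold convexComb
          have hrw : ∀ h ∈ Finset.univ, ((1-t)*α h + t*(if h = 0 then (1:ℝ) else 0)) * P h n v k
              = (1-t)*(α h * P h n v k) + t*((if h = 0 then (1:ℝ) else 0) * P h n v k) := by
            intro h _; ring
          rw [show (fun h => αt h * P h n v k) = fun h => ((1-t)*α h + t*(if h = 0 then (1:ℝ) else 0)) * P h n v k from rfl]
          rw [Finset.sum_congr rfl hrw, Finset.sum_add_distrib, ← Finset.mul_sum,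
            ← Finset.mul_sum, hδ v k]
        rw [hsum j, hsum i] at hLM
        -- hLM : (1-t)*Qj + t*A ≤ (1-t)*Qi + t*Bv
        have habs : C ≤ |C| := le_abs_self C
        nlinarith [mul_le_mul_of_nonneg_left habs (le_of_lt ht0), mul_pos ht0 hd]
  refine ⟨fun α hα h => main α hα (hcost ▸ h), ?_⟩
  rw [hcost]
  constructor
  · exact ⟨hc0, main⟩
  · intro β hβ
    rcases le_or_gt β 1 with h | h
    · exact csInf_le hbdd ⟨⟨hβ.1, h⟩, hβ.2⟩
    · linarith
end

section
/- For 𝒫 = (Bz^r, PGI^r) and all n ≥ 2, the cost of local monotonicity on the class 𝔚 of weighted games satisfies c_𝒫(n,𝔚) ≥ max(0, (n−3)/(n−1)). -/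
open scoped Classical

section Aux

open Finset

lemma bool_le_imp {a b : Bool} (h : a ≤ b) (ha : a = true) : b = true := by
  cases b
  · rw [ha] at h; exact absurd h (by decide)
  · rfl

lemma union_singleton' {α : Type*} [DecidableEq α] (s : Finset α) (a : α) :
    s ∪ {a} = insert a s := by
  rw [Finset.union_comm, ← Finset.insert_eq]

lemma mem_Dset_iff {n : ℕ} (v : SimpleGame n) (i : Fin n) (S : Finset (Fin n)) :
    S ∈ v.Dset i ↔ i ∈ S ∧ v.win S = true ∧ v.win (S.erase i) = false := by
  simp [SimpleGame.Dset]

/-- Banzhaf satisfies local monotonicity. -/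
lemma bz_LM {n : ℕ} (v : SimpleGame n) {i j : Fin n} (h : v.Dominates i j) :
    v.Bz j ≤ v.Bz i := by
  rcases eq_or_ne i j with rfl | hij
  · exact le_rfl
  have hji : j ≠ i := fun hh => hij hh.symm
  unfold SimpleGame.Bz
  apply Finset.card_le_card_of_injOn
    (fun S => if i ∈ S then S else (S ∪ {i}) \ {j})
  · intro S hS
    rw [Finset.mem_coe, mem_Dset_iff] at hS ⊢; beta_reduce
    obtain ⟨hjS, hwin, hlose⟩ := hS
    by_cases hiS : i ∈ S
    · rw [if_pos hiS]
      refine ⟨hiS, hwin, ?_⟩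
      by_contra hc
      have hc' : v.win (S.erase i) = true := by
        cases hw : v.win (S.erase i)
        · exact absurd hw hc
        · rfl
      have hd := h (S.erase i) (Finset.mem_erase.mpr ⟨hji, hjS⟩) (Finset.notMem_erase i S)
      have hwt : v.win ((S.erase i ∪ {i}) \ {j}) = true := bool_le_imp hd hc'
      have heq : (S.erase i ∪ {i}) \ {j} = S.erase j := by
        rw [union_singleton', Finset.insert_erase hiS, Finset.sdiff_singleton_eq_erase]
      rw [heq, hlose] at hwt
      exact absurd hwt (by decide)
    · rw [if_neg hiS]
      have hT : (S ∪ {i}) \ {j} = (insert i S).erase j := by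
        rw [union_singleton', Finset.sdiff_singleton_eq_erase]
      refine ⟨?_, ?_, ?_⟩
      · rw [hT]; exact Finset.mem_erase.mpr ⟨hij, Finset.mem_insert_self i S⟩
      · exact bool_le_imp (h S hjS hiS) hwin
      · rw [hT, Finset.erase_right_comm, Finset.erase_insert hiS]
        exact hlose
  · intro S hS T hT hST
    rw [Finset.mem_coe, mem_Dset_iff] at hS hT
    have hjS : j ∈ S := hS.1
    have hjT : j ∈ T := hT.1
    simp only at hST
    by_cases hiS : i ∈ S <;> by_cases hiT : i ∈ T
    · rw [if_pos hiS, if_pos hiT] at hST; exact hST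
    · exfalso
      rw [if_pos hiS, if_neg hiT] at hST
      have : j ∉ (T ∪ {i}) \ {j} := by simp
      rw [← hST] at this; exact this hjS
    · exfalso
      rw [if_neg hiS, if_pos hiT] at hST
      have : j ∉ (S ∪ {i}) \ {j} := by simp
      rw [hST] at this; exact this hjT
    · rw [if_neg hiS, if_neg hiT] at hST
      have h1 : S \ {j} = T \ {j} := by
        have e1 : (S ∪ {i}) \ {j} = insert i (S \ {j}) := by
          rw [union_singleton', Finset.insert_sdiff_of_notMem _ (by simpa using hij)]
        have e2 : (T ∪ {i}) \ {j} = insert i (T \ {j}) := by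
          rw [union_singleton', Finset.insert_sdiff_of_notMem _ (by simpa using hij)]
        rw [e1, e2] at hST
        have hiS' : i ∉ S \ {j} := fun hh => hiS (Finset.mem_sdiff.mp hh).1
        have hiT' : i ∉ T \ {j} := fun hh => hiT (Finset.mem_sdiff.mp hh).1
        have := congrArg (fun s => Finset.erase s i) hST
        simpa [Finset.erase_insert hiS', Finset.erase_insert hiT'] using this
      have h2 : S = insert j (S \ {j}) := by
        rw [Finset.sdiff_singleton_eq_erase, Finset.insert_erase hjS]
      have h3 : T = insert j (T \ {j}) := by
        rw [Finset.sdiff_singleton_eq_erase, Finset.insert_erase hjT]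
      rw [h2, h3, h1]

end Aux

section Game

open Finset

variable {n : ℕ}

/-- The weighted game `[2; 2,1,…,1]`: winning iff contains `z` or has size ≥ 2. -/
def Gm (n : ℕ) (z : Fin n) : SimpleGame n where
  win S := decide (z ∈ S ∨ 2 ≤ S.card)
  win_empty := by simp
  win_univ := by simp
  win_mono := by
    intro S T hST h
    simp only [decide_eq_true_eq] at h ⊢
    rcases h with h | h
    · exact Or.inl (hST h)
    · exact Or.inr (h.trans (Finset.card_le_card hST))

lemma Gm_win_iff (z : Fin n) (S : Finset (Fin n)) :
    (Gm n z).win S = true ↔ z ∈ S ∨ 2 ≤ S.card := by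
  simp [Gm]

lemma Gm_lose_iff (z : Fin n) (S : Finset (Fin n)) :
    (Gm n z).win S = false ↔ z ∉ S ∧ S.card ≤ 1 := by
  simp only [Gm, decide_eq_false_iff_not]
  push_neg
  exact and_congr Iff.rfl (by omega)

lemma Gm_weighted (z : Fin n) : (Gm n z).IsWeighted := by
  refine ⟨2, fun i => if i = z then 2 else 1, by norm_num, fun i => by positivity, fun S => ?_⟩
  have hsum : ∑ i ∈ S, (if i = z then (2:ℝ) else 1) =
      (S.card : ℝ) + (if z ∈ S then 1 else 0) := by
    have hcongr : ∀ i ∈ S, (if i = z then (2:ℝ) else 1) = 1 + (if i = z then 1 else 0) := by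
      intro i _; split <;> norm_num
    rw [Finset.sum_congr rfl hcongr, Finset.sum_add_distrib]
    simp [Finset.sum_ite_eq' S z (fun _ => (1:ℝ))]
  rw [Gm_win_iff, hsum]
  by_cases hz : z ∈ S
  · rw [if_pos hz]
    have h1 : 1 ≤ S.card := Finset.card_pos.mpr ⟨z, hz⟩
    constructor
    · intro _
      have h1' : (1:ℝ) ≤ (S.card : ℝ) := by exact_mod_cast h1
      linarith
    · intro _; exact Or.inl hz
  · rw [if_neg hz, add_zero]
    constructor
    · rintro (h | h)
      · exact absurd h hz
      · exact_mod_cast h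
    · intro h; right; exact_mod_cast h

lemma Gm_dom (z o : Fin n) (hzo : z ≠ o) : (Gm n z).Dominates z o := by
  intro S hoS hzS
  have hw : (Gm n z).win ((S ∪ {z}) \ {o}) = true := by
    rw [Gm_win_iff]
    left
    simp [hzo, hzS]
  rw [hw]
  exact Bool.le_true _

lemma pair_card (z o : Fin n) (hzo : z ≠ o) : ({z, o} : Finset (Fin n)).card = 2 := by
  rw [Finset.card_insert_of_notMem (by simpa using hzo), Finset.card_singleton]

lemma insert_inj_on_compl (o : Fin n) :
    Set.InjOn (fun k : Fin n => insert o ({k} : Finset (Fin n)))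
      (↑(({o} : Finset (Fin n))ᶜ) : Set (Fin n)) := by
  intro a ha b hb hab
  simp only [Finset.coe_compl, Set.mem_compl_iff, Finset.mem_coe, Finset.mem_singleton] at ha hb
  simp only at hab
  have h1 : a ∈ insert o ({b} : Finset (Fin n)) :=
    hab ▸ Finset.mem_insert.mpr (Or.inr (Finset.mem_singleton_self a))
  rcases Finset.mem_insert.mp h1 with h | h
  · exact absurd h ha
  · exact Finset.mem_singleton.mp h

lemma Gm_Bz_z (z : Fin n) : (Gm n z).Bz z = n := by
  have himg : (Gm n z).Dset z = Finset.univ.image (fun k : Fin n => insert z {k}) := by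
    ext S
    rw [mem_Dset_iff, Finset.mem_image]
    constructor
    · rintro ⟨hzS, hwin, hlose⟩
      rw [Gm_lose_iff] at hlose
      have hc : S.card ≤ 2 := by
        have := Finset.card_erase_of_mem hzS
        omega
      have hc1 : 1 ≤ S.card := Finset.card_pos.mpr ⟨z, hzS⟩
      interval_cases h : S.card
      · obtain ⟨a, ha⟩ := Finset.card_eq_one.mp h
        refine ⟨z, Finset.mem_univ _, ?_⟩
        rw [ha] at hzS
        rw [ha, Finset.mem_singleton.mp hzS]
        simp
      · obtain ⟨a, b, hab, hS⟩ := Finset.card_eq_two.mp h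
        rw [hS] at hzS
        rcases Finset.mem_insert.mp hzS with rfl | hb
        · exact ⟨b, Finset.mem_univ _, hS.symm⟩
        · obtain rfl := Finset.mem_singleton.mp hb
          exact ⟨a, Finset.mem_univ _, by rw [hS, Finset.pair_comm]⟩
    · rintro ⟨k, -, rfl⟩
      refine ⟨Finset.mem_insert_self z _,
        (Gm_win_iff z _).mpr (Or.inl (Finset.mem_insert_self z _)), ?_⟩
      rw [Gm_lose_iff]
      rcases eq_or_ne k z with rfl | hkz
      · simp
      · have hznk : z ∉ ({k} : Finset (Fin n)) := by
          simp only [Finset.mem_singleton]; exact fun h => hkz h.symm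
        rw [Finset.erase_insert hznk]
        exact ⟨hznk, by simp⟩
  have hinj : Function.Injective (fun k : Fin n => insert z ({k} : Finset (Fin n))) := by
    intro a b hab
    simp only at hab
    have h1 : a ∈ insert z ({b} : Finset (Fin n)) :=
      hab ▸ Finset.mem_insert.mpr (Or.inr (Finset.mem_singleton_self a))
    rcases Finset.mem_insert.mp h1 with rfl | h
    · have hb : b ∈ insert a ({a} : Finset (Fin n)) := by
        rw [hab]; exact Finset.mem_insert.mpr (Or.inr (Finset.mem_singleton_self b))
      rcases Finset.mem_insert.mp hb with h | h
      · exact h.symm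
      · exact (Finset.mem_singleton.mp h).symm
    · exact Finset.mem_singleton.mp h
  rw [SimpleGame.Bz, himg, Finset.card_image_of_injective _ hinj, Finset.card_univ,
    Fintype.card_fin]

lemma Gm_Bz_o (z o : Fin n) (hzo : z ≠ o) : (Gm n z).Bz o = n - 2 := by
  have himg : (Gm n z).Dset o =
      (({z, o} : Finset (Fin n))ᶜ).image (fun k : Fin n => insert o {k}) := by
    ext S
    rw [mem_Dset_iff, Finset.mem_image]
    constructor
    · rintro ⟨hoS, hwin, hlose⟩
      rw [Gm_lose_iff] at hlose
      obtain ⟨hz1, hc1⟩ := hlose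
      have hzS : z ∉ S := fun hh => hz1 (Finset.mem_erase.mpr ⟨hzo, hh⟩)
      have hcard : S.card = 2 := by
        have hce := Finset.card_erase_of_mem hoS
        rcases (Gm_win_iff z S).mp hwin with h | h
        · exact absurd h hzS
        · omega
      obtain ⟨a, b, hab, hS⟩ := Finset.card_eq_two.mp hcard
      rw [hS] at hoS hzS
      rcases Finset.mem_insert.mp hoS with rfl | hb
      · refine ⟨b, ?_, hS.symm⟩
        simp only [Finset.mem_compl, Finset.mem_insert, Finset.mem_singleton]
        push_neg
        refine ⟨fun hh => hzS (hh ▸ Finset.mem_insert.mpr (Or.inr (Finset.mem_singleton_self b))),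
          fun hh => hab hh.symm⟩
      · obtain rfl := Finset.mem_singleton.mp hb
        refine ⟨a, ?_, by rw [hS, Finset.pair_comm]⟩
        simp only [Finset.mem_compl, Finset.mem_insert, Finset.mem_singleton]
        push_neg
        exact ⟨fun hh => hzS (hh ▸ Finset.mem_insert_self a _), hab⟩
    · rintro ⟨k, hk, rfl⟩
      simp only [Finset.mem_compl, Finset.mem_insert, Finset.mem_singleton] at hk
      push_neg at hk
      obtain ⟨hkz, hko⟩ := hk
      have honk : o ∉ ({k} : Finset (Fin n)) := by
        simp only [Finset.mem_singleton]; exact fun h => hko h.symm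
      have hcard : (insert o ({k} : Finset (Fin n))).card = 2 := by
        rw [Finset.card_insert_of_notMem honk]; simp
      refine ⟨Finset.mem_insert_self o _, (Gm_win_iff z _).mpr (Or.inr (by omega)), ?_⟩
      rw [Gm_lose_iff, Finset.erase_insert honk]
      constructor
      · simp only [Finset.mem_singleton]; exact fun hh => hkz hh.symm
      · simp
  have hinj : Set.InjOn (fun k : Fin n => insert o ({k} : Finset (Fin n)))
      (↑(({z, o} : Finset (Fin n))ᶜ) : Set (Fin n)) := by
    apply (insert_inj_on_compl o).mono
    intro x hx
    simp only [Finset.coe_compl, Set.mem_compl_iff, Finset.mem_coe, Finset.mem_insert,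
      Finset.mem_singleton] at hx ⊢
    push_neg at hx
    exact hx.2
  rw [SimpleGame.Bz, himg, Finset.card_image_of_injOn hinj, Finset.card_compl,
    Fintype.card_fin, pair_card z o hzo]

end Game

section PGIpart

open Finset

variable {n : ℕ}

lemma mem_Mset_iff (v : SimpleGame n) (i : Fin n) (S : Finset (Fin n)) :
    S ∈ v.Mset i ↔ v.IsMWC S ∧ i ∈ S := by
  simp [SimpleGame.Mset]

lemma Gm_PGI_z (z : Fin n) : (Gm n z).PGI z = 1 := by
  have hms : (Gm n z).Mset z = {{z}} := by
    ext S
    rw [mem_Mset_iff, Finset.mem_singleton]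
    constructor
    · rintro ⟨⟨hwin, hmin⟩, hzS⟩
      by_contra hne
      have hss : ({z} : Finset (Fin n)) ⊂ S :=
        Finset.ssubset_iff_subset_ne.mpr ⟨Finset.singleton_subset_iff.mpr hzS,
          fun h => hne h.symm⟩
      have hl := hmin _ hss
      rw [Gm_lose_iff] at hl
      exact hl.1 (Finset.mem_singleton_self z)
    · rintro rfl
      refine ⟨⟨(Gm_win_iff z _).mpr (Or.inl (Finset.mem_singleton_self z)), ?_⟩,
        Finset.mem_singleton_self z⟩
      intro T hT
      rw [Finset.ssubset_singleton_iff.mp hT]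
      exact (Gm n z).win_empty
  rw [SimpleGame.PGI, hms, Finset.card_singleton]

lemma Gm_PGI_o (z o : Fin n) (hzo : z ≠ o) : (Gm n z).PGI o = n - 2 := by
  have himg : (Gm n z).Mset o =
      (({z, o} : Finset (Fin n))ᶜ).image (fun k : Fin n => insert o {k}) := by
    ext S
    rw [mem_Mset_iff, Finset.mem_image]
    constructor
    · rintro ⟨⟨hwin, hmin⟩, hoS⟩
      have hzS : z ∉ S := by
        intro hzS
        have hne : ({z} : Finset (Fin n)) ≠ S := by
          intro h; rw [← h] at hoS; exact hzo (Finset.mem_singleton.mp hoS).symm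
        have hss : ({z} : Finset (Fin n)) ⊂ S :=
          Finset.ssubset_iff_subset_ne.mpr ⟨Finset.singleton_subset_iff.mpr hzS, hne⟩
        have hl := hmin _ hss
        rw [Gm_lose_iff] at hl
        exact hl.1 (Finset.mem_singleton_self z)
      have hc2 : 2 ≤ S.card := by
        rcases (Gm_win_iff z S).mp hwin with h | h
        · exact absurd h hzS
        · exact h
      have hcard : S.card = 2 := by
        by_contra hne
        obtain ⟨T, hTS, hT2⟩ := Finset.exists_subset_card_eq hc2
        have hss : T ⊂ S := Finset.ssubset_iff_subset_ne.mpr ⟨hTS, fun h => hne (h ▸ hT2)⟩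
        have hl := hmin T hss
        rw [Gm_lose_iff] at hl
        omega
      obtain ⟨a, b, hab, hS⟩ := Finset.card_eq_two.mp hcard
      rw [hS] at hoS hzS
      rcases Finset.mem_insert.mp hoS with rfl | hb
      · refine ⟨b, ?_, hS.symm⟩
        simp only [Finset.mem_compl, Finset.mem_insert, Finset.mem_singleton]
        push_neg
        refine ⟨fun hh => hzS (hh ▸ Finset.mem_insert.mpr (Or.inr (Finset.mem_singleton_self b))),
          fun hh => hab hh.symm⟩
      · obtain rfl := Finset.mem_singleton.mp hb
        refine ⟨a, ?_, by rw [hS, Finset.pair_comm]⟩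
        simp only [Finset.mem_compl, Finset.mem_insert, Finset.mem_singleton]
        push_neg
        exact ⟨fun hh => hzS (hh ▸ Finset.mem_insert_self a _), hab⟩
    · rintro ⟨k, hk, rfl⟩
      simp only [Finset.mem_compl, Finset.mem_insert, Finset.mem_singleton] at hk
      push_neg at hk
      obtain ⟨hkz, hko⟩ := hk
      have honk : o ∉ ({k} : Finset (Fin n)) := by
        simp only [Finset.mem_singleton]; exact fun h => hko h.symm
      have hcard : (insert o ({k} : Finset (Fin n))).card = 2 := by
        rw [Finset.card_insert_of_notMem honk]; simp
      refine ⟨⟨(Gm_win_iff z _).mpr (Or.inr (by omega)), ?_⟩, Finset.mem_insert_self o _⟩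
      intro T hT
      rw [Gm_lose_iff]
      have hTsub := hT.subset
      constructor
      · intro hzT
        rcases Finset.mem_insert.mp (hTsub hzT) with h | h
        · exact hzo h
        · exact hkz (Finset.mem_singleton.mp h).symm
      · have := Finset.card_lt_card hT
        omega
  have hinj : Set.InjOn (fun k : Fin n => insert o ({k} : Finset (Fin n)))
      (↑(({z, o} : Finset (Fin n))ᶜ) : Set (Fin n)) := by
    apply (insert_inj_on_compl o).mono
    intro x hx
    simp only [Finset.coe_compl, Set.mem_compl_iff, Finset.mem_coe, Finset.mem_insert,
      Finset.mem_singleton] at hx ⊢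
    push_neg at hx
    exact hx.2
  rw [SimpleGame.PGI, himg, Finset.card_image_of_injOn hinj, Finset.card_compl,
    Fintype.card_fin, pair_card z o hzo]

end PGIpart

section Main

lemma convexComb_two (α : Fin 2 → ℝ) (m : ℕ) (v : SimpleGame m) (i : Fin m) :
    convexComb α ![BzPI, PGIPI] m v i = α 0 * (v.Bz i : ℝ) + α 1 * (v.PGI i : ℝ) := by
  simp [convexComb, Fin.sum_univ_two, BzPI, PGIPI]

lemma costLM_set_nonempty (n : ℕ) :
    (1 : ℝ) ∈ {β : ℝ | β ∈ Set.Icc (0 : ℝ) 1 ∧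
      ∀ α ∈ stdSimplex ℝ (Fin 2), β ≤ α 0 → LMon WeightedClass n (convexComb α ![BzPI, PGIPI])} := by
  refine ⟨⟨zero_le_one, le_rfl⟩, ?_⟩
  intro α hα h1
  obtain ⟨hnn, hsum⟩ := hα
  rw [Fin.sum_univ_two] at hsum
  have h0 : α 0 = 1 := le_antisymm (by have := hnn 1; linarith) h1
  have h1' : α 1 = 0 := by linarith
  intro v _ i j hdom
  rw [convexComb_two, convexComb_two, h0, h1']
  have := bz_LM v hdom
  have : (v.Bz j : ℝ) ≤ (v.Bz i : ℝ) := by exact_mod_cast this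
  linarith

end Main

/-- for `𝒫 = (Bz^r, PGI^r)` and `n ≥ 2`, the cost of local
monotonicity on weighted games is at least `max(0, (n-3)/(n-1))`. -/
theorem costLM_Bz_PGI_lower_bound (n : ℕ) (hn : 2 ≤ n) :
    max 0 (((n : ℝ) - 3) / ((n : ℝ) - 1)) ≤ costLM ![BzPI, PGIPI] n WeightedClass := by
  have hnR : (2 : ℝ) ≤ (n : ℝ) := by exact_mod_cast hn
  have hbound : ∀ β ∈ {β : ℝ | β ∈ Set.Icc (0 : ℝ) 1 ∧
      ∀ α ∈ stdSimplex ℝ (Fin 2), β ≤ α 0 →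
        LMon WeightedClass n (convexComb α ![BzPI, PGIPI])},
      ((n : ℝ) - 3) / ((n : ℝ) - 1) ≤ β := by
    rintro β ⟨⟨hβ0, hβ1⟩, hprop⟩
    set α : Fin 2 → ℝ := ![β, 1 - β] with hα
    have hmem : α ∈ stdSimplex ℝ (Fin 2) := by
      constructor
      · intro i
        fin_cases i <;> simp [hα] <;> linarith
      · rw [Fin.sum_univ_two]
        simp [hα]
    have hα0 : α 0 = β := by simp [hα]
    have hα1 : α 1 = 1 - β := by simp [hα]
    have hLM := hprop α hmem (le_of_eq hα0.symm)
    set z : Fin n := ⟨0, by omega⟩ with hz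
    set o : Fin n := ⟨1, by omega⟩ with ho
    have hzo : z ≠ o := by
      intro h
      have := congrArg Fin.val h
      simp [hz, ho] at this
    have hineq := hLM (Gm n z) (Gm_weighted z) z o (Gm_dom z o hzo)
    rw [convexComb_two, convexComb_two, hα0, hα1, Gm_Bz_z, Gm_Bz_o z o hzo,
      Gm_PGI_z, Gm_PGI_o z o hzo] at hineq
    have hc : ((n - 2 : ℕ) : ℝ) = (n : ℝ) - 2 := by
      have := Nat.cast_sub hn (R := ℝ)
      simpa using this
    rw [hc] at hineq
    have hn1 : (0 : ℝ) < (n : ℝ) - 1 := by linarith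
    rw [div_le_iff₀ hn1]
    ring_nf at hineq ⊢
    linarith
  have hne : ∃ x, x ∈ {β : ℝ | β ∈ Set.Icc (0 : ℝ) 1 ∧
      ∀ α ∈ stdSimplex ℝ (Fin 2), β ≤ α 0 →
        LMon WeightedClass n (convexComb α ![BzPI, PGIPI])} := ⟨1, costLM_set_nonempty n⟩
  rw [costLM]
  apply max_le
  · exact le_csInf hne fun b hb => hb.1.1
  · exact le_csInf hne hbound
end
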